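/- Let Φ : ℝ → ℝ be Lipschitz continuous and even (Φ(z) = Φ(−z) for all z), let v > 0 and λ ∈ ℝ, and define f_λ^v(z) := (1+z²)^{3/2}·( v/√(1+z²) − Φ(v/√(1+z²)) + λ ). Let w_B be the maximal solution of w' = f_λ^v(w), w(0) = 0, and w_F the maximal solution of w' = f_λ^{−v}(w), w(0) = 0. Suppose both solutions blow up in finite time: w_B(x) → +∞ as x → (x_B*)⁻ and w_F(x) → +∞ as x → (x_F*)⁻ with 0 < x_B*, x_F* < ∞. Then x_B* < x_F* (the blow-up time of the rear profile is strictly smaller than that of the front profile). -/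

import Mathlib

open Set Filter

/-- The traveling wave slope nonlinearity
`f_λ^v(z) = (1+z²)^{3/2}·(v/√(1+z²) − Φ(v/√(1+z²)) + λ)`. -/
noncomputable def fTW (Φ : ℝ → ℝ) (lam v z : ℝ) : ℝ :=
  (1 + z^2) ^ (3/2 : ℝ) *
    (v / Real.sqrt (1 + z^2) - Φ (v / Real.sqrt (1 + z^2)) + lam)

lemma deriv_pos_left {h : ℝ → ℝ} {d x : ℝ} (hd : HasDerivAt h d x) (h0 : 0 < d) :
    ∀ᶠ y in nhdsWithin x (Iio x), h y < h x := by
  have ht : Tendsto (slope h x) (nhdsWithin x {x}ᶜ) (nhds d) :=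
    hasDerivAt_iff_tendsto_slope.mp hd
  have h1 : ∀ᶠ y in nhdsWithin x {x}ᶜ, 0 < slope h x y := ht.eventually (eventually_gt_nhds h0)
  have h2 : nhdsWithin x (Iio x) ≤ nhdsWithin x {x}ᶜ :=
    nhdsWithin_mono x (fun y hy => ne_of_lt hy)
  filter_upwards [h2 h1, self_mem_nhdsWithin] with y hy hyx
  rw [slope_def_field] at hy
  rcases div_pos_iff.mp hy with ⟨h3, h4⟩ | ⟨h3, h4⟩
  · have : y < x := hyx
    linarith
  · linarith

lemma deriv_pos_right {h : ℝ → ℝ} {d x : ℝ} (hd : HasDerivAt h d x) (h0 : 0 < d) :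
    ∀ᶠ y in nhdsWithin x (Ioi x), h x < h y := by
  have ht : Tendsto (slope h x) (nhdsWithin x {x}ᶜ) (nhds d) :=
    hasDerivAt_iff_tendsto_slope.mp hd
  have h1 : ∀ᶠ y in nhdsWithin x {x}ᶜ, 0 < slope h x y := ht.eventually (eventually_gt_nhds h0)
  have h2 : nhdsWithin x (Ioi x) ≤ nhdsWithin x {x}ᶜ :=
    nhdsWithin_mono x (fun y hy => ne_of_gt hy)
  filter_upwards [h2 h1, self_mem_nhdsWithin] with y hy hyx
  rw [slope_def_field] at hy
  rcases div_pos_iff.mp hy with ⟨h3, h4⟩ | ⟨h3, h4⟩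
  · linarith
  · have : x < y := hyx
    linarith

/-- Strict comparison for two autonomous-type ODEs with strictly ordered right-hand
sides and equal initial values. -/
lemma comp_lemma (f g : ℝ → ℝ) (hfg : ∀ y, g y < f y) {a b : ℝ}
    (u w : ℝ → ℝ) (hwa : w a = u a)
    (hw : ∀ x ∈ Ico a b, HasDerivAt w (f (w x)) x)
    (hu : ∀ x ∈ Ico a b, HasDerivAt u (g (u x)) x) :
    ∀ x ∈ Ioo a b, u x < w x := by
  intro x₁ hx₁
  by_contra hle
  push_neg at hle
  set h : ℝ → ℝ := fun x => w x - u x with hh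
  have hmem : ∀ x : ℝ, a ≤ x → x ≤ x₁ → x ∈ Ico a b :=
    fun x h1 h2 => ⟨h1, lt_of_le_of_lt h2 hx₁.2⟩
  have hd : ∀ x : ℝ, a ≤ x → x ≤ x₁ → HasDerivAt h (f (w x) - g (u x)) x :=
    fun x h1 h2 => (hw x (hmem x h1 h2)).sub (hu x (hmem x h1 h2))
  have hcont : ∀ x : ℝ, a ≤ x → x ≤ x₁ → ContinuousAt h x :=
    fun x h1 h2 => (hd x h1 h2).continuousAt
  have ha0 : h a = 0 := by simp [hh, hwa]
  have hax₁ : a < x₁ := hx₁.1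
  have hpa : (0:ℝ) < f (w a) - g (u a) := by
    rw [hwa]; exact sub_pos.mpr (hfg (u a))
  have hr : ∀ᶠ y in nhdsWithin a (Ioi a), h a < h y :=
    deriv_pos_right (hd a le_rfl hax₁.le) hpa
  obtain ⟨a', ha'pos, ha'mem⟩ :=
    (hr.and (eventually_of_mem (Ioo_mem_nhdsGT_of_mem ⟨le_rfl, hax₁⟩) (fun x hx => hx))).exists
  rw [ha0] at ha'pos
  set S : Set ℝ := {x | x ∈ Icc a' x₁ ∧ h x ≤ 0} with hS
  have hx₁S : x₁ ∈ S := ⟨⟨ha'mem.2.le, le_rfl⟩, sub_nonpos.mpr hle⟩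
  have hSne : S.Nonempty := ⟨x₁, hx₁S⟩
  have hSbdd : BddBelow S := ⟨a', fun x hx => hx.1.1⟩
  set c := sInf S with hc
  have hca' : a' ≤ c := le_csInf hSne (fun x hx => hx.1.1)
  have hcx₁ : c ≤ x₁ := csInf_le hSbdd hx₁S
  have hac : a ≤ c := le_trans ha'mem.1.le hca'
  have hcc : ContinuousAt h c := hcont c hac hcx₁
  have hc0 : h c ≤ 0 := by
    have hcl : c ∈ closure S := csInf_mem_closure hSne hSbdd
    haveI := mem_closure_iff_nhdsWithin_neBot.mp hcl
    have htend : Tendsto h (nhdsWithin c S) (nhds (h c)) := hcc.continuousWithinAt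
    exact le_of_tendsto htend (eventually_of_mem self_mem_nhdsWithin (fun y hy => hy.2))
  have ha'c : a' < c := hca'.lt_of_ne (fun he => by rw [← he] at hc0; linarith)
  have hpos : ∀ x, x ∈ Ioo a' c → 0 < h x := by
    intro x hx
    by_contra hnp
    push_neg at hnp
    have hxS : x ∈ S := ⟨⟨hx.1.le, le_trans hx.2.le hcx₁⟩, hnp⟩
    exact absurd (csInf_le hSbdd hxS) (not_le.mpr hx.2)
  have hcge : 0 ≤ h c := by
    have hcl : c ∈ closure (Ioo a' c) := by
      rw [closure_Ioo (ne_of_lt ha'c)]; exact ⟨ha'c.le, le_rfl⟩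
    haveI := mem_closure_iff_nhdsWithin_neBot.mp hcl
    have htend : Tendsto h (nhdsWithin c (Ioo a' c)) (nhds (h c)) := hcc.continuousWithinAt
    exact ge_of_tendsto htend (eventually_of_mem self_mem_nhdsWithin (fun y hy => (hpos y hy).le))
  have hceq : h c = 0 := le_antisymm hc0 hcge
  have hwuc : w c = u c := by
    have h5 : w c - u c = 0 := hceq
    linarith
  have hpc : (0:ℝ) < f (w c) - g (u c) := by
    rw [hwuc]; exact sub_pos.mpr (hfg (u c))
  have hl : ∀ᶠ y in nhdsWithin c (Iio c), h y < h c :=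
    deriv_pos_left (hd c hac hcx₁) hpc
  obtain ⟨y, hy1, hy2⟩ :=
    (hl.and (eventually_of_mem (Ioo_mem_nhdsLT_of_mem ⟨ha'c, le_rfl⟩) (fun x hx => hx))).exists
  have hy3 := hpos y hy2
  rw [hceq] at hy1
  linarith

lemma fTW_lt (Φ : ℝ → ℝ) (hsym : ∀ z, Φ (-z) = Φ z) {v : ℝ} (hv : 0 < v) (lam z : ℝ) :
    fTW Φ lam (-v) z < fTW Φ lam v z := by
  have hs : 0 < Real.sqrt (1 + z^2) := Real.sqrt_pos.mpr (by positivity)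
  have hp : 0 < (1 + z^2 : ℝ) ^ (3/2 : ℝ) := Real.rpow_pos_of_pos (by positivity) _
  unfold fTW
  rw [neg_div, hsym]
  have hq : 0 < v / Real.sqrt (1 + z^2) := div_pos hv hs
  nlinarith [mul_pos hp hq]

/-- for Lipschitz even `Φ`, `v > 0` and any `λ`, if the back slope solution
`w_B' = f_λ^v(w_B)`, `w_B(0)=0`, blows up (to `+∞`) at the finite time `x_B* > 0` and the
front slope solution `w_F' = f_λ^{-v}(w_F)`, `w_F(0)=0`, blows up at the finite time
`x_F* > 0`, then `x_B* < x_F*`. -/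
theorem stmt_6 (Φ : ℝ → ℝ) (K : NNReal) (hΦ : LipschitzWith K Φ)
    (hsym : ∀ z, Φ (-z) = Φ z) (v lam : ℝ) (hv : 0 < v)
    (wB wF : ℝ → ℝ) (xB xF : ℝ) (hxB : 0 < xB) (hxF : 0 < xF)
    (hB0 : wB 0 = 0) (hF0 : wF 0 = 0)
    (hB : ∀ x ∈ Ico (0:ℝ) xB, HasDerivAt wB (fTW Φ lam v (wB x)) x)
    (hF : ∀ x ∈ Ico (0:ℝ) xF, HasDerivAt wF (fTW Φ lam (-v) (wF x)) x)
    (hBblow : Tendsto wB (nhdsWithin xB (Iio xB)) atTop)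
    (hFblow : Tendsto wF (nhdsWithin xF (Iio xF)) atTop) :
    xB < xF := by
  by_contra hcon
  push_neg at hcon
  have hfg : ∀ y, fTW Φ lam (-v) y < fTW Φ lam v y := fun y => fTW_lt Φ hsym hv lam y
  have hcmp : ∀ x ∈ Ioo (0:ℝ) xF, wF x < wB x :=
    comp_lemma _ _ hfg wF wB (by rw [hB0, hF0])
      (fun x hx => hB x ⟨hx.1, lt_of_lt_of_le hx.2 hcon⟩) hF
  set x₀ := xF / 2 with hx₀def
  have hx₀ : x₀ ∈ Ioo (0:ℝ) xF := ⟨by positivity, by simp [hx₀def]; linarith⟩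
  have h1 : wF x₀ < wB x₀ := hcmp x₀ hx₀
  obtain ⟨t, ht1, ht2⟩ :=
    ((hFblow.eventually (eventually_gt_atTop (wB x₀))).and
      (eventually_of_mem (Ioo_mem_nhdsLT_of_mem ⟨hx₀.2, le_rfl⟩) (fun x hx => hx))).exists
  have hcontF : ContinuousOn wF (Icc x₀ t) := fun x hx =>
    ((hF x ⟨le_trans hx₀.1.le hx.1, lt_of_le_of_lt hx.2 ht2.2⟩).continuousAt).continuousWithinAt
  have hmemI : wB x₀ ∈ Icc (wF x₀) (wF t) := ⟨h1.le, ht1.le⟩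
  obtain ⟨x₁, hx₁mem, hx₁val⟩ := intermediate_value_Icc ht2.1.le hcontF hmemI
  set δ := x₁ - x₀ with hδdef
  have hδpos : 0 < δ := by
    have : x₀ ≠ x₁ := by
      intro he
      rw [← he] at hx₁val
      linarith
    have := lt_of_le_of_ne hx₁mem.1 this
    simp [hδdef]; linarith
  have hδlt : δ < xF - x₀ := by
    have : x₁ < xF := lt_of_le_of_lt hx₁mem.2 ht2.2
    simp [hδdef]; linarith
  set wS : ℝ → ℝ := fun x => wF (x + δ) with hwS
  have hwSd : ∀ x ∈ Ico x₀ (xF - δ), HasDerivAt wS (fTW Φ lam (-v) (wS x)) x := by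
    intro x hx
    have hmem : x + δ ∈ Ico (0:ℝ) xF := ⟨by linarith [hx.1, hx₀.1, hδpos], by linarith [hx.2]⟩
    have hout := hF (x + δ) hmem
    have hin : HasDerivAt (fun y : ℝ => y + δ) 1 x := (hasDerivAt_id x).add_const δ
    have := hout.comp x hin
    simpa [hwS, Function.comp_def] using this
  have hwSa : wB x₀ = wS x₀ := by
    have : x₀ + δ = x₁ := by simp [hδdef]
    simp [hwS, this, hx₁val]
  have hcmp2 : ∀ x ∈ Ioo x₀ (xF - δ), wS x < wB x :=
    comp_lemma _ _ hfg wS wB hwSa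
      (fun x hx => hB x ⟨le_trans hx₀.1.le hx.1, by linarith [hx.2, hδpos, hcon]⟩) hwSd
  -- wB is bounded on Icc 0 (xF - δ)
  have hsub : Icc (0:ℝ) (xF - δ) ⊆ Ico 0 xB := fun x hx =>
    ⟨hx.1, by linarith [hx.2, hδpos, hcon]⟩
  have hcontB : ContinuousOn wB (Icc (0:ℝ) (xF - δ)) := fun x hx =>
    ((hB x (hsub hx)).continuousAt).continuousWithinAt
  obtain ⟨z, hzmem, hzmax⟩ := (isCompact_Icc).exists_isMaxOn
    ⟨0, ⟨le_rfl, by linarith [hx₀.1]⟩⟩ hcontB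
  set M := wB z with hM
  have hshift : Tendsto (fun x : ℝ => x + δ) (nhdsWithin (xF - δ) (Iio (xF - δ)))
      (nhdsWithin xF (Iio xF)) := by
    refine tendsto_nhdsWithin_of_tendsto_nhds_of_eventually_within _ ?_ ?_
    · have h5 : Tendsto (fun x : ℝ => x + δ) (nhds (xF - δ)) (nhds xF) := by
        have h7 := (continuous_id.add (continuous_const (y := δ))).tendsto (xF - δ)
        simpa [Pi.add_def] using h7
      exact h5.mono_left nhdsWithin_le_nhds
    · filter_upwards [self_mem_nhdsWithin] with x hx
      have : x < xF - δ := hx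
      simp only [mem_Iio]
      linarith
  have hSblow : Tendsto wS (nhdsWithin (xF - δ) (Iio (xF - δ))) atTop :=
    hFblow.comp hshift
  obtain ⟨y, hy1, hy2⟩ :=
    ((hSblow.eventually (eventually_gt_atTop M)).and
      (eventually_of_mem (Ioo_mem_nhdsLT_of_mem
        (show xF - δ ∈ Ioc x₀ (xF - δ) from ⟨by linarith, le_rfl⟩))
        (fun x hx => hx))).exists
  have hy3 : wS y < wB y := hcmp2 y hy2
  have hy4 : wB y ≤ M := hzmax ⟨by linarith [hy2.1, hx₀.1], hy2.2.le⟩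
  linarith
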